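/- Let k be a field and (A, 𝔪) a local k-algebra with residue field K = A/𝔪. Let Ã = K ⊗_k A and let M̃ be the kernel of the evaluation map Ã → K, λ⊗a ↦ λ·a(x). Then there is a K-linear isomorphism M̃/M̃² ≅ Ω_{A/k} ⊗_A K; that is, the conormal space of the ideal M̃ of Ã is isomorphic to the fiber of the module of Kähler differentials of A over k at the closed point. -/
import Mathlib


open IsLocalRing TensorProduct

section LocalAlgebra

variable (k A : Type*) [Field k] [CommRing A] [IsLocalRing A] [Algebra k A]

instance : IsScalarTower k A (ResidueField A) :=
  IsScalarTower.of_algebraMap_eq fun x =>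
    (IsLocalRing.ResidueField.map_residue (algebraMap k A) x).symm

/-- The evaluation map `Ã = K ⊗_k A → K`, `λ ⊗ a ↦ λ·a(x)`. -/
noncomputable def ev : (ResidueField A ⊗[k] A) →ₐ[ResidueField A] ResidueField A :=
  Algebra.TensorProduct.lift (AlgHom.id _ _) (IsScalarTower.toAlgHom k A (ResidueField A))
    fun _ _ => Commute.all _ _

/-- The ideal `M̃ = ker(ev) ⊆ Ã`. -/
noncomputable def Mker : Ideal (ResidueField A ⊗[k] A) := RingHom.ker (ev k A)

/-- For `m ∈ 𝔪`, the element `1 ⊗ m` of `M̃`. -/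
noncomputable def oneTmul (m : maximalIdeal A) : Mker k A :=
  ⟨(1 : ResidueField A) ⊗ₜ[k] (m : A), by
    simp only [Mker, RingHom.mem_ker, ev, Algebra.TensorProduct.lift_tmul, map_one, one_mul,
      AlgHom.coe_id, id_eq, IsScalarTower.coe_toAlgHom', ResidueField.algebraMap_eq]
    exact Ideal.Quotient.eq_zero_iff_mem.mpr m.2⟩

/-- For `a : A`, the element `1 ⊗ a − a(x) ⊗ 1` of `M̃`. -/
noncomputable def gen (a : A) : Mker k A :=
  ⟨(1 : ResidueField A) ⊗ₜ[k] a - residue A a ⊗ₜ[k] (1 : A), by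
    simp [Mker, RingHom.mem_ker, ev, Algebra.TensorProduct.lift_tmul]⟩

end LocalAlgebra

section Aux
variable (k A : Type*) [Field k] [CommRing A] [IsLocalRing A] [Algebra k A]

local notation "K" => ResidueField A
local notation "Ã" => ResidueField A ⊗[k] A
local notation "T" => ResidueField A ⊗[A] (Ω[A⁄k])

noncomputable local instance instARight : Algebra A Ã := Algebra.TensorProduct.rightAlgebra

variable {k A}

lemma ev_tmul (l : K) (a : A) : ev k A (l ⊗ₜ[k] a) = l * residue A a := by
  simp [ev, Algebra.TensorProduct.lift_tmul, ResidueField.algebraMap_eq]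

lemma algebraMap_right_eq (a : A) : algebraMap A Ã a = (1 : K) ⊗ₜ[k] a := rfl

lemma algebraMap_left_eq (l : K) : algebraMap K Ã l = l ⊗ₜ[k] (1 : A) := rfl

lemma ev_algebraMap_right (a : A) : ev k A (algebraMap A Ã a) = residue A a := by
  rw [algebraMap_right_eq, ev_tmul, one_mul]

lemma mem_Mker_iff {z : Ã} : z ∈ Mker k A ↔ ev k A z = 0 := RingHom.mem_ker

/-- Key lemma: elements of `Ã` with equal evaluation act equally on the cotangent module. -/
lemma smul_cot_congr {z₁ z₂ : Ã} (h : ev k A z₁ = ev k A z₂) (x : (Mker k A).Cotangent) :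
    z₁ • x = z₂ • x := by
  obtain ⟨m, rfl⟩ := Ideal.toCotangent_surjective _ x
  rw [← map_smul, ← map_smul, Ideal.toCotangent_eq]
  have : ((z₁ • m : Mker k A) : Ã) - (z₂ • m : Mker k A) = (z₁ - z₂) * (m : Ã) := by
    simp [sub_mul, smul_eq_mul]
  rw [this, pow_two]
  exact Ideal.mul_mem_mul (by simp [mem_Mker_iff, map_sub, h]) m.2

local instance : IsScalarTower A K ((Mker k A).Cotangent) := by
  constructor
  intro a l x
  rw [← algebraMap_smul (R := K) Ã (a • l) x, ← algebraMap_smul (R := K) Ã l x,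
    ← algebraMap_smul (R := A) Ã a (algebraMap K Ã l • x), smul_smul]
  exact smul_cot_congr (by
    simp [Algebra.smul_def, map_mul, (ev k A).commutes, ev_algebraMap_right,
      ResidueField.algebraMap_eq, ev_tmul, algebraMap_left_eq]) x

variable (k A) in
/-- `μ : A →ₗ[k] K ⊗[A] Ω[A⁄k]`, `a ↦ 1 ⊗ d a`. -/
noncomputable def muMap : A →ₗ[k] T :=
  ((TensorProduct.mk A (ResidueField A) (Ω[A⁄k]) 1).restrictScalars k).comp
    (KaehlerDifferential.D k A).toLinearMap

lemma muMap_apply (a : A) : muMap k A a = (1 : K) ⊗ₜ[A] KaehlerDifferential.D k A a :=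
  rfl

variable (k A) in
/-- `Φ : Ã →ₗ[K] K ⊗[A] Ω[A⁄k]`, `λ ⊗ a ↦ λ ⊗ d a`. -/
noncomputable def phiMap : Ã →ₗ[ResidueField A] T :=
  LinearMap.liftBaseChange (ResidueField A) (muMap k A)

lemma phiMap_tmul (l : K) (a : A) :
    phiMap k A (l ⊗ₜ[k] a) = l ⊗ₜ[A] KaehlerDifferential.D k A a := by
  show l • ((1 : K) ⊗ₜ[A] KaehlerDifferential.D k A a) = _
  rw [smul_tmul', smul_eq_mul, mul_one]

lemma phiMap_mul (u v : Ã) :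
    phiMap k A (u * v) = ev k A u • phiMap k A v + ev k A v • phiMap k A u := by
  induction u with
  | zero => simp
  | add u₁ u₂ h₁ h₂ =>
    simp only [add_mul, map_add, h₁, h₂, add_smul, smul_add]
    abel
  | tmul l a =>
    induction v with
    | zero => simp
    | add v₁ v₂ h₁ h₂ =>
      simp only [mul_add, map_add, h₁, h₂, add_smul, smul_add]
      abel
    | tmul m b =>
      rw [Algebra.TensorProduct.tmul_mul_tmul, phiMap_tmul, phiMap_tmul, phiMap_tmul,
        ev_tmul, ev_tmul]
      have hD := (KaehlerDifferential.D k A).leibniz a b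
      have e1 : ∀ (x : K) (c : A) (ω : Ω[A⁄k]), x ⊗ₜ[A] (c • ω) = (residue A c * x) ⊗ₜ[A] ω := by
        intro x c ω
        rw [tmul_smul, ← algebraMap_smul (R := A) K c (x ⊗ₜ[A] ω), smul_tmul',
          Algebra.smul_def, ResidueField.algebraMap_eq]
        simp [Algebra.algebraMap_self, mul_comm]
      rw [hD, tmul_add, e1, e1, smul_tmul', smul_tmul', smul_eq_mul, smul_eq_mul]
      congr 1 <;> ring
noncomputable local instance instModTilde : Module Ã T :=
  Module.compHom T (ev k A).toRingHom

lemma tilde_smul_def (z : Ã) (t : T) : z • t = ev k A z • t := rfl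

local instance : IsScalarTower K Ã T := by
  constructor
  intro l z t
  rw [tilde_smul_def, tilde_smul_def, Algebra.smul_def, map_mul, (ev k A).commutes, mul_smul]
  simp [Algebra.algebraMap_self]

variable (k A) in
set_option maxHeartbeats 1000000 in
/-- `Φ` restricted to the ideal, as an `Ã`-linear map (target has the `ev`-twisted structure). -/
noncomputable def fAux : Mker k A →ₗ[Ã] T where
  toFun m := phiMap k A (m : Ã)
  map_add' m n := by simp
  map_smul' z m := by
    rw [RingHom.id_apply]
    show phiMap k A ((z • m : Mker k A) : Ã) = z • phiMap k A (m : Ã)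
    have h : ((z • m : Mker k A) : Ã) = z * (m : Ã) := by simp [smul_eq_mul]
    rw [h, phiMap_mul, tilde_smul_def, (mem_Mker_iff).mp m.2, zero_smul, add_zero]

variable (k A) in
set_option maxHeartbeats 1000000 in
/-- The induced map `M̃/M̃² → K ⊗[A] Ω[A⁄k]`, `Ã`-linearly. -/
noncomputable def fCot : (Mker k A).Cotangent →ₗ[Ã] T :=
  Submodule.liftQ _ (fAux k A) (by
    rw [Submodule.smul_le]
    intro z hz m _
    rw [LinearMap.mem_ker, map_smul]
    show z • phiMap k A (m : Ã) = 0
    rw [tilde_smul_def, (mem_Mker_iff).mp hz, zero_smul])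

lemma fCot_toCotangent (m : Mker k A) :
    fCot k A ((Mker k A).toCotangent m) = phiMap k A (m : Ã) := rfl

variable (k A) in
/-- The `K`-linear version of `fCot`. -/
noncomputable def fK : (Mker k A).Cotangent →ₗ[ResidueField A] T :=
  (fCot k A).restrictScalars (ResidueField A)

lemma fK_toCotangent (m : Mker k A) :
    fK k A ((Mker k A).toCotangent m) = phiMap k A (m : Ã) := rfl
variable (k A) in
noncomputable def d0 : A →ₗ[k] Ã :=
  Algebra.TensorProduct.includeRight.toLinearMap -
    ((Algebra.linearMap K Ã).restrictScalars k ∘ₗ (Algebra.linearMap A K).restrictScalars k)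

lemma d0_apply (a : A) : d0 k A a = ((gen k A a : Ã)) := by
  simp [d0, gen, algebraMap_left_eq, ResidueField.algebraMap_eq]

variable (k A) in
noncomputable def dMker : A →ₗ[k] (Mker k A) :=
  LinearMap.codRestrict ((Mker k A).restrictScalars k) (d0 k A) (fun a => by
    rw [d0_apply]; exact (gen k A a).2)

variable (k A) in
noncomputable def dlin : A →ₗ[k] (Mker k A).Cotangent :=
  ((Mker k A).toCotangent.restrictScalars k).comp (dMker k A)

lemma dlin_apply (a : A) :
    dlin k A a = (Mker k A).toCotangent (gen k A a) := by
  have h : dMker k A a = gen k A a := Subtype.ext (d0_apply a)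
  simp only [dlin, LinearMap.coe_comp, LinearMap.coe_restrictScalars, Function.comp_apply, h]

lemma gen_one_eq_zero : gen k A 1 = 0 := Subtype.ext (by simp [gen])

variable (k A) in
noncomputable def derivD : Derivation k A (Mker k A).Cotangent where
  toLinearMap := dlin k A
  map_one_eq_zero' := by
    show dlin k A 1 = 0
    rw [dlin_apply, gen_one_eq_zero, map_zero]
  leibniz' a b := by
    show dlin k A (a * b) = _
    rw [dlin_apply, dlin_apply, dlin_apply,
      ← algebraMap_smul (R := A) Ã a ((Mker k A).toCotangent (gen k A b)),
      ← algebraMap_smul (R := A) Ã b ((Mker k A).toCotangent (gen k A a)),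
      ← map_smul, ← map_smul, ← map_add, Ideal.toCotangent_eq]
    have key : ((gen k A (a*b) : Ã)) -
        ((algebraMap A Ã a • gen k A b : Mker k A) + (algebraMap A Ã b • gen k A a : Mker k A) : Ã)
        = -((gen k A a : Ã) * (gen k A b : Ã)) := by
      show ((gen k A (a*b) : Ã)) -
          (algebraMap A Ã a * (gen k A b : Ã) + algebraMap A Ã b * (gen k A a : Ã)) = _
      simp only [gen, algebraMap_right_eq, Algebra.TensorProduct.tmul_mul_tmul, mul_sub, sub_mul,
        one_mul, mul_one, map_mul]
      ring_nf
    rw [Submodule.coe_add, key, pow_two]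
    exact neg_mem (Ideal.mul_mem_mul (gen k A a).2 (gen k A b).2)

variable (k A) in
noncomputable def ellMap : Ω[A⁄k] →ₗ[A] (Mker k A).Cotangent :=
  (derivD k A).liftKaehlerDifferential

lemma ellMap_D (a : A) :
    ellMap k A (KaehlerDifferential.D k A a) = (Mker k A).toCotangent (gen k A a) := by
  rw [ellMap, Derivation.liftKaehlerDifferential_comp_D]
  exact dlin_apply a

variable (k A) in
noncomputable def gMap : T →ₗ[ResidueField A] (Mker k A).Cotangent :=
  LinearMap.liftBaseChange (ResidueField A) (ellMap k A)
variable (k A) in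
noncomputable def genT (u : Ã) : Mker k A :=
  ⟨u - algebraMap K Ã (ev k A u), by
    simp [mem_Mker_iff, map_sub, algebraMap_left_eq, ev_tmul]⟩

lemma gMap_phi (u : Ã) : gMap k A (phiMap k A u) = (Mker k A).toCotangent (genT k A u) := by
  induction u with
  | zero =>
    have h0 : genT k A 0 = 0 := Subtype.ext (by simp [genT])
    simp [h0]
  | add u v hu hv =>
    have hadd : genT k A (u + v) = genT k A u + genT k A v :=
      Subtype.ext (by simp [genT, map_add]; ring)
    rw [map_add, map_add, hu, hv, hadd, map_add]
  | tmul l a =>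
    rw [phiMap_tmul]
    have h1 : gMap k A ((l : K) ⊗ₜ[A] KaehlerDifferential.D k A a) =
        l • ellMap k A (KaehlerDifferential.D k A a) := rfl
    rw [h1, ellMap_D, ← algebraMap_smul (R := K) Ã l ((Mker k A).toCotangent (gen k A a)),
      ← map_smul]
    congr 1
    apply Subtype.ext
    show algebraMap K Ã l * (gen k A a : Ã) = _
    simp [gen, genT, algebraMap_left_eq, ev_tmul, mul_sub, Algebra.TensorProduct.tmul_mul_tmul]

lemma gMap_fK (x : (Mker k A).Cotangent) : gMap k A (fK k A x) = x := by
  obtain ⟨m, rfl⟩ := Ideal.toCotangent_surjective _ x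
  rw [fK_toCotangent, gMap_phi]
  congr 1
  exact Subtype.ext (by simp [genT, (mem_Mker_iff).mp m.2])

lemma fK_ell (ω : Ω[A⁄k]) : fK k A (ellMap k A ω) = (1 : K) ⊗ₜ[A] ω := by
  have h : ((fK k A).restrictScalars A ∘ₗ ellMap k A) =
      TensorProduct.mk A K (Ω[A⁄k]) 1 := by
    apply Derivation.liftKaehlerDifferential_unique
    apply Derivation.ext
    intro a
    show fK k A (ellMap k A (KaehlerDifferential.D k A a)) =
      (1 : K) ⊗ₜ[A] KaehlerDifferential.D k A a
    rw [ellMap_D, fK_toCotangent]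
    show phiMap k A ((1 : K) ⊗ₜ[k] a - residue A a ⊗ₜ[k] (1 : A)) = _
    rw [map_sub, phiMap_tmul, phiMap_tmul, Derivation.map_one_eq_zero, tmul_zero, sub_zero]
  exact LinearMap.congr_fun h ω

lemma fK_gMap (t : T) : fK k A (gMap k A t) = t := by
  induction t with
  | zero => simp
  | add u v hu hv => rw [map_add, map_add, hu, hv]
  | tmul l ω =>
    have h1 : gMap k A ((l : K) ⊗ₜ[A] ω) = l • ellMap k A ω := rfl
    rw [h1, map_smul, fK_ell, smul_tmul', smul_eq_mul, mul_one]

variable (k A) in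
lemma mainEquiv : Nonempty
    ((Mker k A).Cotangent ≃ₗ[ResidueField A] (ResidueField A ⊗[A] Ω[A⁄k])) :=
  ⟨LinearEquiv.ofLinear (fK k A) (gMap k A) (LinearMap.ext fun t => fK_gMap t)
    (LinearMap.ext fun x => gMap_fK x)⟩

end Aux

/-- Let `k` be a field and `(A, 𝔪)` a local `k`-algebra with residue field
`K = A/𝔪`, `Ã = K ⊗_k A`, and `M̃` the kernel of the evaluation map `Ã → K`.  Then there is a
`K`-linear isomorphism `M̃/M̃² ≅ K ⊗_A Ω_{A/k}`: the conormal space of the ideal `M̃` of `Ã` is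
isomorphic to the fiber of the module of Kähler differentials of `A` over `k` at the closed
point. -/
theorem stmt_10 (k A : Type*) [Field k] [CommRing A] [IsLocalRing A] [Algebra k A] :
    Nonempty ((Mker k A).Cotangent ≃ₗ[ResidueField A] (ResidueField A ⊗[A] Ω[A⁄k])) := by
  exact mainEquiv k A
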